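/- Let L be a finite-dimensional Lie algebra over a field k, and let (L_i)_{i ∈ ℤ} be a family of k-subspaces of L forming an internal direct sum decomposition L = ⊕_{i ∈ ℤ} L_i with ⁅L_i, L_j⁆ ⊆ L_{i+j} for all i, j. Let B be a nondegenerate symmetric invariant bilinear form on L such that B(L_i, L_j) = 0 whenever i + j ≠ 0. Suppose e ∈ L_2 and the centraliser C = {x ∈ L : ⁅e, x⁆ = 0} is contained in the sum of the L_i with i ≥ 0. Then for every i ≥ 0 the linear map ad e : L_i → L_{i+2}, x ↦ ⁅e, x⁆, is surjective, and dim_k C = dim_k L_0 + dim_k L_1. -/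

import Mathlib

set_option synthInstance.maxHeartbeats 1000000
set_option maxHeartbeats 1000000

open Module LinearMap

section Aux
variable {k : Type*} [Field k] {L : Type*} [AddCommGroup L] [Module k L]

/-- Uniqueness of graded components: if a finite sum of graded pieces is zero, each is zero. -/
lemma aux_comps_eq_zero {Lgr : ℤ → Submodule k L} (hint : DirectSum.IsInternal Lgr)
    (g : ℤ → L) (s : Finset ℤ) (hg : ∀ i, g i ∈ Lgr i) (hg0 : ∀ i ∉ s, g i = 0)
    (hsum : ∑ i ∈ s, g i = 0) : ∀ i, g i = 0 := by
  classical
  set w : DirectSum ℤ (fun i => ↥(Lgr i)) :=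
    ∑ i ∈ s, DirectSum.of (fun i => ↥(Lgr i)) i ⟨g i, hg i⟩ with hw
  have hcoe : DirectSum.coeAddMonoidHom Lgr w = 0 := by
    rw [hw, map_sum]
    rw [Finset.sum_congr rfl fun i _ => DirectSum.coeAddMonoidHom_of Lgr i ⟨g i, hg i⟩]
    exact hsum
  have w0 : w = 0 := hint.injective (hcoe.trans (map_zero (DirectSum.coeAddMonoidHom Lgr)).symm)
  intro i
  by_cases hi : i ∈ s
  · have : w i = ⟨g i, hg i⟩ := by
      rw [hw, DFinsupp.finset_sum_apply]
      rw [Finset.sum_eq_single_of_mem i hi]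
      · exact DirectSum.of_eq_same i _
      · intro j _ hji
        exact DirectSum.of_eq_of_ne _ _ _ (Ne.symm hji)
    have := this.symm.trans (by rw [w0])
    exact congrArg Subtype.val this
  · exact hg0 i hi

end Aux

theorem surjective_ad_and_finrank_centralizer_of_graded
    (k : Type*) [Field k] (L : Type*) [LieRing L] [LieAlgebra k L] [Module.Finite k L]
    (Lgr : ℤ → Submodule k L)
    (hint : DirectSum.IsInternal Lgr)
    (hbr : ∀ i j : ℤ, ∀ x ∈ Lgr i, ∀ y ∈ Lgr j, ⁅x, y⁆ ∈ Lgr (i + j))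
    (B : L →ₗ[k] L →ₗ[k] k)
    (hsymm : ∀ x y : L, B x y = B y x)
    (hinv : ∀ x y z : L, B ⁅x, y⁆ z = B x ⁅y, z⁆)
    (hnd : ∀ x : L, (∀ y : L, B x y = 0) → x = 0)
    (horth : ∀ i j : ℤ, i + j ≠ 0 → ∀ x ∈ Lgr i, ∀ y ∈ Lgr j, B x y = 0)
    (e : L) (he : e ∈ Lgr 2)
    (hC : ∀ x : L, ⁅e, x⁆ = 0 → x ∈ ⨆ i ≥ (0 : ℤ), Lgr i) :
    (∀ i : ℤ, 0 ≤ i → ∀ y ∈ Lgr (i + 2), ∃ x ∈ Lgr i, ⁅e, x⁆ = y) ∧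
    Module.finrank k (LinearMap.ker (LieAlgebra.ad k L e)) =
      Module.finrank k (Lgr 0) + Module.finrank k (Lgr 1) := by
  classical
  have hind : iSupIndep Lgr := hint.submodule_iSupIndep
  have htop : ⨆ i, Lgr i = ⊤ := hint.submodule_iSup_eq_top
  -- one-sided nondegeneracy of the pairing between Lgr i and Lgr j, i + j = 0
  have nd : ∀ i j : ℤ, i + j = 0 → ∀ x ∈ Lgr i, (∀ y ∈ Lgr j, B x y = 0) → x = 0 := by
    intro i j hij x hx hxy
    apply hnd
    intro y
    have hy : y ∈ ⨆ i, Lgr i := htop ▸ Submodule.mem_top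
    refine Submodule.iSup_induction Lgr (motive := fun y => B x y = 0) hy (fun j' y hy => ?_)
      (by simp) (fun y z hy hz => by
        show B x (y + z) = 0
        rw [map_add, show B x y = 0 from hy, show B x z = 0 from hz, add_zero])
    by_cases h : i + j' = 0
    · have hjj : j' = j := by omega
      exact hxy y (hjj ▸ hy)
    · exact horth i j' h x hx y hy
  -- the pairing maps
  set bm : ∀ i j : ℤ, ↥(Lgr i) →ₗ[k] Module.Dual k ↥(Lgr j) :=
    fun i j => B.compl₁₂ (Lgr i).subtype (Lgr j).subtype with hbm
  have bminj : ∀ i j : ℤ, i + j = 0 → Function.Injective (bm i j) := by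
    intro i j hij
    rw [← LinearMap.ker_eq_bot, LinearMap.ker_eq_bot']
    intro x hx0
    refine Subtype.ext (nd i j hij x x.2 fun y hy => ?_)
    have h := LinearMap.congr_fun hx0 ⟨y, hy⟩
    simpa [hbm] using h
  have dimle : ∀ i j : ℤ, i + j = 0 → finrank k ↥(Lgr i) ≤ finrank k ↥(Lgr j) := by
    intro i j hij
    have := LinearMap.finrank_le_finrank_of_injective (bminj i j hij)
    rwa [Subspace.dual_finrank_eq] at this
  have dimeq : ∀ i j : ℤ, i + j = 0 → finrank k ↥(Lgr i) = finrank k ↥(Lgr j) :=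
    fun i j hij => le_antisymm (dimle i j hij) (dimle j i (by omega))
  have bmsurj : ∀ i j : ℤ, i + j = 0 → Function.Surjective (bm i j) := by
    intro i j hij
    have hd : finrank k ↥(Lgr i) = finrank k (Module.Dual k ↥(Lgr j)) := by
      rw [Subspace.dual_finrank_eq]; exact dimeq i j hij
    exact (LinearMap.injective_iff_surjective_of_finrank_eq_finrank hd).mp (bminj i j hij)
  -- elements of negative degree in the centraliser vanish
  have negker : ∀ j : ℤ, j < 0 → ∀ z ∈ Lgr j, ⁅e, z⁆ = 0 → z = 0 := by
    intro j hj z hz hez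
    have h1 : z ∈ ⨆ i ≥ (0 : ℤ), Lgr i := hC z hez
    have h2 : (⨆ i ≥ (0 : ℤ), Lgr i) ≤ ⨆ (i : ℤ) (_ : i ≠ j), Lgr i := by
      refine iSup₂_le fun i hi => ?_
      exact le_iSup₂ (f := fun (i : ℤ) (_ : i ≠ j) => Lgr i) i (by omega)
    exact (hind j).le_bot ⟨hz, h2 h1⟩
  -- surjectivity of ad e : Lgr i → Lgr (i+2) for i ≥ 0
  have surjad : ∀ i : ℤ, 0 ≤ i → ∀ y ∈ Lgr (i + 2), ∃ x ∈ Lgr i, ⁅e, x⁆ = y := by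
    intro i hi
    have hmem : ∀ x : ↥(Lgr i), ⁅e, (x : L)⁆ ∈ Lgr (i + 2) := by
      intro x
      have := hbr 2 i e he x x.2
      rwa [show (2 : ℤ) + i = i + 2 by ring] at this
    set f : ↥(Lgr i) →ₗ[k] ↥(Lgr (i + 2)) :=
      LinearMap.codRestrict _ ((LieAlgebra.ad k L e).comp (Lgr i).subtype) hmem with hf
    have hfsurj : Function.Surjective f := by
      rw [← LinearMap.dualMap_injective_iff]
      set φ := bm (-(i + 2)) (i + 2)
      have hφ : Function.Surjective φ := bmsurj _ _ (by ring)
      have hcomp : Function.Injective (f.dualMap ∘ₗ φ) := by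
        rw [← LinearMap.ker_eq_bot, eq_bot_iff]
        intro z hz
        have hz' : ∀ x : ↥(Lgr i), B (z : L) ⁅e, (x : L)⁆ = 0 := by
          intro x
          have h := LinearMap.congr_fun (LinearMap.mem_ker.mp hz) x
          exact h
        have hez : ⁅e, (z : L)⁆ ∈ Lgr (-i) := by
          have := hbr 2 (-(i + 2)) e he z z.2
          rwa [show (2 : ℤ) + -(i + 2) = -i by ring] at this
        have hez0 : ⁅e, (z : L)⁆ = 0 := by
          refine nd (-i) i (by ring) _ hez fun x hx => ?_
          have h1 : B ⁅(z : L), e⁆ x = B (z : L) ⁅e, x⁆ := hinv _ _ _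
          have h2 := hz' ⟨x, hx⟩
          have h3 : ⁅(z : L), e⁆ = -⁅e, (z : L)⁆ := by rw [← lie_skew]
          have h4 : B ⁅e, (z : L)⁆ x = -(B (z : L) ⁅e, x⁆) := by
            rw [← h1, h3, map_neg, LinearMap.neg_apply, neg_neg]
          rw [h4]
          exact neg_eq_zero.mpr h2
        have hz0 : (z : L) = 0 := negker _ (by omega) _ z.2 hez0
        exact (Submodule.mem_bot k).mpr (Subtype.ext hz0)
      intro a b hab
      obtain ⟨u, rfl⟩ := hφ a
      obtain ⟨v, rfl⟩ := hφ b
      exact congrArg φ (hcomp hab)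
    intro y hy
    obtain ⟨x, hx⟩ := hfsurj ⟨y, hy⟩
    exact ⟨x, x.2, congrArg Subtype.val hx⟩
  refine ⟨surjad, ?_⟩
  -- the graded pieces of the centraliser
  set K : ℤ → Submodule k L := fun i => Lgr i ⊓ LinearMap.ker (LieAlgebra.ad k L e) with hK
  have Kneg : ∀ i : ℤ, i < 0 → K i = ⊥ := by
    intro i hi
    rw [eq_bot_iff]
    rintro x ⟨hx1, hx2⟩
    have : ⁅e, x⁆ = 0 := by simpa [LieAlgebra.ad_apply] using hx2
    simpa [Submodule.mem_bot] using negker i hi x hx1 this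
  have Kbig : ∀ i : ℤ, Lgr i = ⊥ → K i = ⊥ := by
    intro i hi
    rw [eq_bot_iff]
    rintro x ⟨hx1, _⟩
    rw [hi] at hx1; simpa using hx1
  -- dimension of K i for i ≥ 0
  have Kdim : ∀ i : ℤ, 0 ≤ i →
      finrank k ↥(K i) + finrank k ↥(Lgr (i + 2)) = finrank k ↥(Lgr i) := by
    intro i hi
    set a : ↥(Lgr i) →ₗ[k] L := (LieAlgebra.ad k L e) ∘ₗ (Lgr i).subtype with ha
    have hker : LinearMap.ker a =
        Submodule.comap (Lgr i).subtype (LinearMap.ker (LieAlgebra.ad k L e)) := by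
      ext x; simp [ha]
    have hrange : LinearMap.range a = Lgr (i + 2) := by
      apply le_antisymm
      · rintro _ ⟨x, rfl⟩
        have h := hbr 2 i e he x x.2
        rw [show (2 : ℤ) + i = i + 2 by ring] at h
        simpa [ha, LieAlgebra.ad_apply] using h
      · intro y hy
        obtain ⟨x, hx, hxy⟩ := surjad i hi y hy
        exact ⟨⟨x, hx⟩, by simp [ha, LieAlgebra.ad_apply, hxy]⟩
    have hrn := LinearMap.finrank_range_add_finrank_ker a
    rw [hrange] at hrn
    have hkerdim : finrank k ↥(LinearMap.ker a) = finrank k ↥(K i) := by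
      have h1 : Submodule.map (Lgr i).subtype (LinearMap.ker a) = K i := by
        rw [hker, Submodule.map_comap_subtype, hK]
      rw [← h1]
      exact (Submodule.equivMapOfInjective _ (Submodule.injective_subtype _) _).finrank_eq
    omega
  -- centraliser is the sup of the K i
  have Ksup : LinearMap.ker (LieAlgebra.ad k L e) = ⨆ i, K i := by
    apply le_antisymm
    · intro x hx
      have hx' : ⁅e, x⁆ = 0 := by simpa [LieAlgebra.ad_apply] using LinearMap.mem_ker.mp hx
      have hxt : x ∈ ⨆ i, Lgr i := htop ▸ Submodule.mem_top
      obtain ⟨c, hc, hcsum⟩ := (Submodule.mem_iSup_iff_exists_finsupp Lgr x).mp hxt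
      have hcsum' : ∑ j ∈ c.support, c j = x := by rw [← hcsum]; rfl
      have hcomp : ∀ i : ℤ, ⁅e, c i⁆ = 0 := by
        have hmain := aux_comps_eq_zero hint (fun i => ⁅e, c (i - 2)⁆)
          (c.support.image (· + 2))
          (fun i => by
            have h := hbr 2 (i - 2) e he (c (i - 2)) (hc (i - 2))
            rwa [show (2 : ℤ) + (i - 2) = i by ring] at h)
          (fun i hi => by
            show ⁅e, c (i - 2)⁆ = 0
            by_cases hc2 : c (i - 2) = 0
            · rw [hc2, lie_zero]
            · exact absurd (Finset.mem_image.mpr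
                ⟨i - 2, Finsupp.mem_support_iff.mpr hc2, by ring⟩) hi)
          (by
            rw [Finset.sum_image (fun a _ b _ h => by omega)]
            have : ∀ j ∈ c.support, ⁅e, c (j + 2 - 2)⁆ = ⁅e, c j⁆ := by
              intro j _; norm_num
            rw [Finset.sum_congr rfl this]
            have h5 : ∑ j ∈ c.support, ⁅e, c j⁆ = ⁅e, x⁆ := by
              rw [← hcsum']
              exact (map_sum (LieAlgebra.ad k L e) (fun j => c j) c.support).symm
            rw [h5, hx'])
        intro i
        have h := hmain (i + 2)
        simpa using h
      rw [← hcsum']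
      refine Submodule.sum_mem _ fun j _ => Submodule.mem_iSup_of_mem j ?_
      exact Submodule.mem_inf.mpr ⟨hc j, LinearMap.mem_ker.mpr
        (by simpa [LieAlgebra.ad_apply] using hcomp j)⟩
    · exact iSup_le fun i => inf_le_right
  -- finiteness of the grading
  have hfin : ∃ N : ℕ, ∀ i : ℤ, (N : ℤ) < i → Lgr i = ⊥ := by
    have hfinS : {i : ℤ | Lgr i ≠ ⊥}.Finite := by
      rw [← Cardinal.lt_aleph0_iff_set_finite]
      have hr : Module.rank k L < Cardinal.aleph0 := Module.rank_lt_aleph0 k L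
      have hcard := hind.subtype_ne_bot_le_rank
      have h2 := lt_of_le_of_lt hcard (by rw [Cardinal.lift_lt_aleph0]; exact hr)
      rw [← Cardinal.lift_lt_aleph0]
      exact h2
    obtain ⟨b, hb⟩ := hfinS.bddAbove
    refine ⟨b.toNat, fun i hi => ?_⟩
    by_contra hne
    have : i ≤ b := hb hne
    have h2 : b ≤ (b.toNat : ℤ) := Int.self_le_toNat b
    omega
  obtain ⟨N, hN⟩ := hfin
  -- telescoping
  set T : ℕ → Submodule k L := fun M => ⨆ j ∈ Finset.range (M + 1), K (j : ℤ) with hT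
  have hT0 : T 0 = K 0 := by
    rw [hT]
    simp
  have hTsucc : ∀ M : ℕ, T (M + 1) = K ((M : ℤ) + 1) ⊔ T M := by
    intro M
    rw [hT]
    simp only []
    rw [Finset.range_add_one, Finset.iSup_insert]
    push_cast
    ring_nf
  have hTle : ∀ M : ℕ, T M ≤ ⨆ (j : ℤ) (_ : j ≤ (M : ℤ)), Lgr j := by
    intro M
    refine iSup₂_le fun j hj => ?_
    have hjM : (j : ℤ) ≤ (M : ℤ) := by
      have := Finset.mem_range.mp hj; omega
    exact le_trans inf_le_left (le_iSup₂ (f := fun (j : ℤ) (_ : j ≤ (M : ℤ)) => Lgr j) _ hjM)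
  have hdisj : ∀ M : ℕ, Disjoint (K ((M : ℤ) + 1)) (T M) := by
    intro M
    refine (hind ((M : ℤ) + 1)).mono inf_le_left ?_
    refine le_trans (hTle M) (iSup₂_le fun j hj => ?_)
    exact le_iSup₂ (f := fun (j : ℤ) (_ : j ≠ (M : ℤ) + 1) => Lgr j) j (by omega)
  have hrank : ∀ M : ℕ,
      finrank k ↥(T (M + 1)) = finrank k ↥(K ((M : ℤ) + 1)) + finrank k ↥(T M) := by
    intro M
    have h := Submodule.finrank_sup_add_finrank_inf_eq (K ((M : ℤ) + 1)) (T M)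
    rw [(hdisj M).eq_bot, finrank_bot, add_zero] at h
    rw [hTsucc M, h]
  have P : ∀ M : ℕ, finrank k ↥(T M) + finrank k ↥(Lgr ((M : ℤ) + 1))
      + finrank k ↥(Lgr ((M : ℤ) + 2)) = finrank k ↥(Lgr 0) + finrank k ↥(Lgr 1) := by
    intro M
    induction M with
    | zero =>
       have h0 := Kdim 0 le_rfl
       rw [hT0, show ((0 : ℕ) : ℤ) + 1 = 1 by norm_num, show ((0 : ℕ) : ℤ) + 2 = 2 by norm_num]
       rw [show (0 : ℤ) + 2 = 2 by norm_num] at h0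
       omega
    | succ M ih =>
       have hK1 := Kdim ((M : ℤ) + 1) (by omega)
       rw [show ((M : ℤ) + 1) + 2 = (M : ℤ) + 3 by ring] at hK1
       have hr := hrank M
       rw [show ((M + 1 : ℕ) : ℤ) + 1 = (M : ℤ) + 2 by push_cast; ring, show ((M + 1 : ℕ) : ℤ) + 2 = (M : ℤ) + 3 by push_cast; ring]
       omega
  have hKT : ∀ i : ℤ, 0 ≤ i → i ≤ (N : ℤ) → K i ≤ T N := by
    intro i h0 hiN
    have hmem : i.toNat ∈ Finset.range (N + 1) := by
      rw [Finset.mem_range]; omega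
    have h := le_iSup₂ (f := fun (j : ℕ) (_ : j ∈ Finset.range (N + 1)) => K (j : ℤ))
      i.toNat hmem
    rw [Int.toNat_of_nonneg h0] at h
    exact h
  have hTN : (⨆ i, K i) = T N := by
    apply le_antisymm
    · refine iSup_le fun i => ?_
      rcases lt_or_ge i 0 with hi | hi
      · rw [Kneg i hi]; exact bot_le
      · rcases le_or_gt i (N : ℤ) with hiN | hiN
        · exact hKT i hi hiN
        · rw [Kbig i (hN i hiN)]; exact bot_le
    · exact iSup₂_le fun j _ => le_iSup K ((j : ℤ))
  have hfinal := P N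
  rw [hN ((N : ℤ) + 1) (by omega), hN ((N : ℤ) + 2) (by omega), finrank_bot] at hfinal
  rw [Ksup, hTN]
  omega
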